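/- Let f : ℝ^d → ℝ be continuous and suppose the set Θ' = {θ : f(θ) ≤ 0} is bounded and not a singleton. Let {P_θ : θ ∈ Θ'} be pairwise mutually absolutely continuous probability measures. Then no unbiased estimator g with range contained in Θ' exists. -/

import Mathlib

open MeasureTheory

theorem no_unbiased_on_bounded_sublevel_set {d : ℕ} {X : Type*} [MeasurableSpace X]
    (f : (Fin d → ℝ) → ℝ) (hf : Continuous f)
    (hbdd : Bornology.IsBounded {θ : Fin d → ℝ | f θ ≤ 0})
    (hne : ∃ a ∈ {θ : Fin d → ℝ | f θ ≤ 0}, ∃ b ∈ {θ : Fin d → ℝ | f θ ≤ 0}, a ≠ b)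
    (P : (Fin d → ℝ) → Measure X)
    (hP : ∀ θ ∈ {θ : Fin d → ℝ | f θ ≤ 0}, IsProbabilityMeasure (P θ))
    (hac : ∀ θ ∈ {θ : Fin d → ℝ | f θ ≤ 0}, ∀ θ'' ∈ {θ : Fin d → ℝ | f θ ≤ 0}, P θ ≪ P θ'') :
    ¬ ∃ g : X → (Fin d → ℝ), Measurable g ∧ (∀ x, f (g x) ≤ 0) ∧
      (∀ θ ∈ {θ : Fin d → ℝ | f θ ≤ 0}, Integrable g (P θ)) ∧
      (∀ θ ∈ {θ : Fin d → ℝ | f θ ≤ 0}, ∫ x, g x ∂(P θ) = θ) := by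
  rintro ⟨g, hgm, hgr, hgi, hgu⟩
  set S := {θ : Fin d → ℝ | f θ ≤ 0} with hS
  obtain ⟨a, ha, b, hb, hab⟩ := hne
  -- linear functional
  set L : (Fin d → ℝ) →L[ℝ] ℝ := ∑ i, (b i - a i) • ContinuousLinearMap.proj i with hL
  have hLapp : ∀ x : Fin d → ℝ, L x = ∑ i, (b i - a i) * x i := by
    intro x
    simp [hL, ContinuousLinearMap.sum_apply]
  have hLab : L a < L b := by
    have : L b - L a = ∑ i, (b i - a i) ^ 2 := by
      rw [hLapp, hLapp, ← Finset.sum_sub_distrib]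
      congr 1; ext i; ring
    have hpos : 0 < ∑ i, (b i - a i) ^ 2 := by
      have hne' : ∃ i, b i ≠ a i := by
        by_contra h
        push_neg at h
        exact hab (funext fun i => (h i).symm)
      obtain ⟨i, hi⟩ := hne'
      refine Finset.sum_pos' (fun j _ => sq_nonneg _) ⟨i, Finset.mem_univ i, ?_⟩
      exact pow_two_pos_of_ne_zero (sub_ne_zero.mpr hi)
    linarith
  -- compactness and max
  have hScl : IsClosed S := isClosed_le hf continuous_const
  have hScomp : IsCompact S := Metric.isCompact_of_isClosed_isBounded hScl hbdd
  obtain ⟨m, hm, hmax⟩ := hScomp.exists_isMaxOn ⟨a, ha⟩ L.continuous.continuousOn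
  have hPm := hP m hm
  -- key: for every θ ∈ S, L θ = L m
  have key : ∀ θ ∈ S, L θ = L m := by
    have hle : ∀ x, L (g x) ≤ L m := fun x => hmax (hgr x)
    have hint : Integrable (fun x => L (g x)) (P m) := L.integrable_comp (hgi m hm)
    have hI : ∫ x, L (g x) ∂(P m) = L m := by
      rw [ContinuousLinearMap.integral_comp_comm L (hgi m hm), hgu m hm]
    have hzero : ∫ x, (L m - L (g x)) ∂(P m) = 0 := by
      rw [integral_sub (integrable_const _) hint, hI, integral_const]
      simp
    have hae : (fun x => L m - L (g x)) =ᵐ[P m] 0 :=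
      (integral_eq_zero_iff_of_nonneg (fun x => by simpa using hle x)
        ((integrable_const _).sub hint)).mp hzero
    have haem : (fun x => L (g x)) =ᵐ[P m] fun _ => L m := by
      filter_upwards [hae] with x hx
      have hx' : L m - L (g x) = 0 := hx
      linarith
    intro θ hθ
    have hacm : P θ ≪ P m := hac θ hθ m hm
    have haeθ : (fun x => L (g x)) =ᵐ[P θ] fun _ => L m := hacm.ae_le haem
    have hPθ := hP θ hθ
    calc L θ = ∫ x, L (g x) ∂(P θ) := by
          rw [ContinuousLinearMap.integral_comp_comm L (hgi θ hθ), hgu θ hθ]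
      _ = ∫ _, L m ∂(P θ) := integral_congr_ae haeθ
      _ = L m := by rw [integral_const]; simp
  have := (key a ha).trans (key b hb).symm
  linarith
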